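/- Let R and S be commutative rings with unity, f : R → S a ring homomorphism, and J a proper ideal of S. Assume f maps every regular element of R to a regular element of S. If the amalgamation R ⋈^f J is a total ring of quotients, then so is R. -/

import Mathlib

open Pointwise

/-- The amalgamation `R ⋈^f J` of `R` with `S` along the ideal `J` with respect to
`f : R →+* S`, as a subring of `R × S`. -/
def amalgamation {R S : Type*} [CommRing R] [CommRing S] (f : R →+* S) (J : Ideal S) :
    Subring (R × S) where
  carrier := {p | ∃ j ∈ J, p.2 = f p.1 + j}
  zero_mem' := ⟨0, J.zero_mem, by simp⟩
  one_mem' := ⟨0, J.zero_mem, by simp⟩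
  add_mem' := by
    rintro ⟨a, a'⟩ ⟨b, b'⟩ ⟨j, hj, h1⟩ ⟨k, hk, h2⟩
    exact ⟨j + k, J.add_mem hj hk, by simp_all; ring⟩
  neg_mem' := by
    rintro ⟨a, a'⟩ ⟨j, hj, h1⟩
    exact ⟨-j, J.neg_mem hj, by simp_all; ring⟩
  mul_mem' := by
    rintro ⟨a, a'⟩ ⟨b, b'⟩ ⟨j, hj, h1⟩ ⟨k, hk, h2⟩
    refine ⟨f a * k + j * f b + j * k, ?_, by simp_all; ring⟩
    exact J.add_mem (J.add_mem (J.mul_mem_left _ hk) (J.mul_mem_right _ hj))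
      (J.mul_mem_right _ hj)

/-- The set of zero-divisors of a commutative ring `A`. -/
def zdivSet (A : Type*) [CommRing A] : Set A := {a | ∃ b, b ≠ 0 ∧ a * b = 0}

/-- A commutative ring is a total ring of quotients if every regular element is a unit. -/
def IsTotalRingOfQuotients (A : Type*) [CommRing A] : Prop :=
  ∀ a : A, a ∈ nonZeroDivisors A → IsUnit a

theorem stmt16 {R S : Type*} [CommRing R] [CommRing S] (f : R →+* S) (J : Ideal S)
    (hJ : J ≠ ⊤) (hreg : ∀ r ∈ nonZeroDivisors R, f r ∈ nonZeroDivisors S)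
    (hT : IsTotalRingOfQuotients (amalgamation f J)) :
    IsTotalRingOfQuotients R := by
  intro r hr
  set x : amalgamation f J := ⟨(r, f r), ⟨0, J.zero_mem, by simp⟩⟩ with hxdef
  have hx : x ∈ nonZeroDivisors (amalgamation f J) := by
    rw [mem_nonZeroDivisors_iff_right]
    rintro ⟨⟨a, a'⟩, j, hj, hja⟩ hy
    have hval : ((a, a') : R × S) * (r, f r) = 0 := congrArg Subtype.val hy
    rw [Prod.mk_mul_mk, Prod.mk_eq_zero] at hval
    have ha : a = 0 := (mem_nonZeroDivisors_iff_right.mp hr) a hval.1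
    subst ha
    simp only [map_zero, zero_add] at hja
    have hjz : j = 0 := (mem_nonZeroDivisors_iff_right.mp (hreg r hr)) j (by rw [← hja]; exact hval.2)
    exact Subtype.ext (Prod.ext rfl (by simp [hja, hjz]))
  obtain ⟨z, hz⟩ := isUnit_iff_exists_inv.mp (hT x hx)
  have : (r * (z : R × S).1, f r * (z : R × S).2) = (1 : R × S) :=
    congrArg Subtype.val hz
  exact IsUnit.of_mul_eq_one (z : R × S).1 (Prod.ext_iff.mp this).1
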